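/- arXiv:0902.0876 — 2 statements merged into one kernel-verified Lean document; each statement's English description precedes it below -/
import Mathlib

section
/- Let (T, F) be a torsion pair on an abelian category A and B the associated tilted heart in D(A). A complex T• with all terms in T is exact (acyclic) as a complex in A if and only if it is exact as a complex in B. -/
open CategoryTheory CategoryTheory.Limits CategoryTheory.Pretriangulated

universe w v u

/-- A torsion pair `(T, F)` on an abelian category. -/
structure TorsionPair (C : Type u) [Category.{v} C] [Abelian C] where
  torsion : C → Prop
  torsionFree : C → Prop
  torsion_summand : ∀ (X Y : C) (i : Y ⟶ X) (r : X ⟶ Y),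
    torsion X → i ≫ r = 𝟙 Y → torsion Y
  torsionFree_summand : ∀ (X Y : C) (i : Y ⟶ X) (r : X ⟶ Y),
    torsionFree X → i ≫ r = 𝟙 Y → torsionFree Y
  hom_orth : ∀ (X Y : C), torsion X → torsionFree Y → ∀ f : X ⟶ Y, f = 0
  exists_ses : ∀ X : C, ∃ (T₀ F₀ : C) (f : T₀ ⟶ X) (g : X ⟶ F₀) (w : f ≫ g = 0),
    torsion T₀ ∧ torsionFree F₀ ∧ (CategoryTheory.ShortComplex.mk f g w).ShortExact

variable {C : Type u} [Category.{v} C] [Abelian C] [HasDerivedCategory.{w} C]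

/-- The heart of the HRS t-structure associated with a torsion pair: complexes `X` with
`H⁰(X) ∈ T`, `H⁻¹(X) ∈ F` and `Hⁱ(X) = 0` for `i ≠ -1, 0`. -/
def TorsionPair.heart (tp : TorsionPair C) : DerivedCategory C → Prop := fun X =>
  tp.torsion ((DerivedCategory.homologyFunctor C 0).obj X) ∧
  tp.torsionFree ((DerivedCategory.homologyFunctor C (-1)).obj X) ∧
  ∀ i : ℤ, i ≠ 0 → i ≠ -1 → IsZero ((DerivedCategory.homologyFunctor C i).obj X)

/-- The objects of the heart isomorphic to `F₀[1]` for a torsion-free object `F₀`. -/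
def TorsionPair.heartF1 (tp : TorsionPair C) : DerivedCategory C → Prop := fun X =>
  ∃ F₀ : C, tp.torsionFree F₀ ∧
    Nonempty (X ≅ ((DerivedCategory.singleFunctor C 0).obj F₀)⟦(1 : ℤ)⟧)

/-- The objects of the heart isomorphic to `T₀` (as a stalk complex in degree `0`)
for a torsion object `T₀`. -/
def TorsionPair.heartT (tp : TorsionPair C) : DerivedCategory C → Prop := fun X =>
  ∃ T₀ : C, tp.torsion T₀ ∧ Nonempty (X ≅ (DerivedCategory.singleFunctor C 0).obj T₀)

/-- A complex of objects of `B` (indexed by `ℤ`) is exact in `B` iff it splits into short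
exact sequences of `B`; since short exact sequences in the heart `B` are exactly the
distinguished triangles of `D(A)` with vertices in `B`, exactness in `B` of a complex of
torsion objects is expressed by this splitting into triangles. -/
def TorsionPair.ExactInHeart (tp : TorsionPair C) (K : CochainComplex C ℤ) : Prop :=
  ∃ (Z : ℤ → DerivedCategory C) (_ : ∀ n, tp.heart (Z n))
    (i : ∀ n : ℤ, Z n ⟶ (DerivedCategory.singleFunctor C 0).obj (K.X n))
    (p : ∀ n : ℤ, (DerivedCategory.singleFunctor C 0).obj (K.X n) ⟶ Z (n + 1))
    (h : ∀ n : ℤ, Z (n + 1) ⟶ (Z n)⟦(1 : ℤ)⟧),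
    (∀ n : ℤ, Pretriangulated.Triangle.mk (i n) (p n) (h n) ∈
      distTriang (DerivedCategory C)) ∧
    (∀ n : ℤ, (DerivedCategory.singleFunctor C 0).map (K.d n (n + 1)) =
      p n ≫ i (n + 1))

section Aux

set_option linter.unusedSectionVars false

namespace TorsionPair

variable (tp : TorsionPair C)

lemma torsion_of_iso {X Y : C} (e : X ≅ Y) (hX : tp.torsion X) : tp.torsion Y :=
  tp.torsion_summand X Y e.inv e.hom hX (by simp)

lemma torsionFree_of_iso {X Y : C} (e : X ≅ Y) (hX : tp.torsionFree X) : tp.torsionFree Y :=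
  tp.torsionFree_summand X Y e.inv e.hom hX (by simp)

lemma torsionFree_of_isZero {X : C} (hX : IsZero X) : tp.torsionFree X := by
  obtain ⟨T₀, F₀, f, g, w, hT, hF, hse⟩ := tp.exists_ses X
  have := hse.epi_g
  have hg : g = 0 := hX.eq_of_src g 0
  have hF₀ : IsZero F₀ := IsZero.of_epi_eq_zero g hg
  exact tp.torsionFree_of_iso (hF₀.iso hX) hF

lemma torsion_of_epi {X Y : C} (q : X ⟶ Y) [Epi q] (hX : tp.torsion X) : tp.torsion Y := by
  obtain ⟨T₀, F₀, f, g, w, hT, hF, hse⟩ := tp.exists_ses Y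
  have := hse.mono_f
  have := hse.epi_g
  have hqg : q ≫ g = 0 := tp.hom_orth _ _ hX hF _
  have hg : g = 0 := by rw [← cancel_epi q, hqg, comp_zero]
  have : Epi f := hse.exact.epi_f hg
  have : IsIso f := isIso_of_mono_of_epi f
  exact tp.torsion_of_iso (asIso f) hT

end TorsionPair

variable (C)

/-- The single functor to the derived category factors through `Q`. -/
noncomputable def singleCompQIso :
    DerivedCategory.singleFunctor C 0 ≅
      HomologicalComplex.single C (ComplexShape.up ℤ) 0 ⋙ DerivedCategory.Q :=
  (SingleFunctors.evaluation _ _ 0).mapIso (DerivedCategory.singleFunctorsPostcompQIso C)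

/-- Homology of a single object in the derived category. -/
noncomputable def homologySingleIso (n : ℤ) (X : C) :
    (DerivedCategory.homologyFunctor C n).obj ((DerivedCategory.singleFunctor C 0).obj X) ≅
      ((HomologicalComplex.single C (ComplexShape.up ℤ) 0).obj X).homology n :=
  (DerivedCategory.homologyFunctor C n).mapIso ((singleCompQIso C).app X) ≪≫
    (DerivedCategory.homologyFunctorFactors C n).app _

lemma isZero_homology_single (X : C) (n : ℤ) (hn : n ≠ 0) :
    IsZero ((DerivedCategory.homologyFunctor C n).obj
      ((DerivedCategory.singleFunctor C 0).obj X)) :=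
  (HomologicalComplex.isZero_single_obj_homology _ 0 X n hn).of_iso (homologySingleIso C n X)

/-- The natural isomorphism `H⁰(X[0]) ≅ X`. -/
noncomputable def gammaIso :
    DerivedCategory.singleFunctor C 0 ⋙ DerivedCategory.homologyFunctor C 0 ≅ 𝟭 C :=
  Functor.isoWhiskerRight (singleCompQIso C) _ ≪≫ Functor.associator _ _ _ ≪≫
    Functor.isoWhiskerLeft _ (DerivedCategory.homologyFunctorFactors C 0) ≪≫
      HomologicalComplex.homologyFunctorSingleIso C _ 0

variable {C}

lemma exact_comp_mono_iff {X₁ X₂ X₃ X₄ : C} (f : X₁ ⟶ X₂) (g : X₂ ⟶ X₃) (m : X₃ ⟶ X₄)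
    [Mono m] (w : f ≫ g = 0) :
    (ShortComplex.mk f (g ≫ m) (by rw [← Category.assoc, w, zero_comp])).Exact ↔
      (ShortComplex.mk f g w).Exact :=
  (ShortComplex.exact_iff_of_epi_of_isIso_of_mono
    (S₁ := ShortComplex.mk f g w)
    (S₂ := ShortComplex.mk f (g ≫ m) (by rw [← Category.assoc, w, zero_comp]))
    { τ₁ := 𝟙 _, τ₂ := 𝟙 _, τ₃ := m, comm₁₂ := by simp, comm₂₃ := by simp }).symm

lemma exact_epi_comp_iff {X₀ X₁ X₂ X₃ : C} (e : X₀ ⟶ X₁) [Epi e] (f : X₁ ⟶ X₂) (g : X₂ ⟶ X₃)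
    (w : f ≫ g = 0) :
    (ShortComplex.mk (e ≫ f) g (by rw [Category.assoc, w, comp_zero])).Exact ↔
      (ShortComplex.mk f g w).Exact :=
  ShortComplex.exact_iff_of_epi_of_isIso_of_mono
    (S₁ := ShortComplex.mk (e ≫ f) g (by rw [Category.assoc, w, comp_zero]))
    (S₂ := ShortComplex.mk f g w)
    { τ₁ := e, τ₂ := 𝟙 _, τ₃ := 𝟙 _, comm₁₂ := by simp, comm₂₃ := by simp }

lemma epi_toCycles_of_exactAt (K : CochainComplex C ℤ) (n : ℤ) (h : K.ExactAt (n+1)) :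
    Epi (K.toCycles n (n+1)) := by
  rw [K.exactAt_iff' n (n+1) (n+1+1) (ComplexShape.prev_eq' _ (by simp))
    (ComplexShape.next_eq' _ (by simp))] at h
  have h1 : Epi (K.sc' n (n+1) (n+1+1)).toCycles :=
    (ShortComplex.exact_iff_epi_toCycles _).1 h
  have h2 := K.toCycles_cyclesIsoSc'_hom n (n+1) (n+1+1) (ComplexShape.prev_eq' _ (by simp))
    (ComplexShape.next_eq' _ (by simp))
  have h3 : K.toCycles n (n+1) =
      (K.sc' n (n+1) (n+1+1)).toCycles ≫
        (K.cyclesIsoSc' n (n+1) (n+1+1) (ComplexShape.prev_eq' _ (by simp))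
          (ComplexShape.next_eq' _ (by simp))).inv := by
    exact (Iso.eq_comp_inv _).2 h2
  rw [h3]
  exact epi_comp' h1 inferInstance

lemma iCycles_comp_toCycles_zero (K : CochainComplex C ℤ) (n : ℤ) :
    K.iCycles n ≫ K.toCycles n (n+1) = 0 := by
  rw [← cancel_mono (K.iCycles (n+1)), Category.assoc, K.toCycles_i, K.iCycles_d, zero_comp]

lemma exact_iCycles_toCycles (K : CochainComplex C ℤ) (n : ℤ) :
    (ShortComplex.mk (K.iCycles n) (K.toCycles n (n+1))
      (iCycles_comp_toCycles_zero K n)).Exact := by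
  have h1 : (ShortComplex.mk (K.iCycles n) (K.d n (n+1)) (K.iCycles_d n (n+1))).Exact :=
    ShortComplex.exact_of_f_is_kernel _ (K.cyclesIsKernel n (n+1) (ComplexShape.next_eq' _
      (by simp)))
  have h2 : (ShortComplex.mk (K.iCycles n) (K.toCycles n (n+1) ≫ K.iCycles (n+1))
      (by rw [← Category.assoc, iCycles_comp_toCycles_zero, zero_comp])).Exact :=
    ShortComplex.exact_of_iso
      (S₁ := ShortComplex.mk (K.iCycles n) (K.d n (n+1)) (K.iCycles_d n (n+1)))
      (ShortComplex.isoMk (Iso.refl _) (Iso.refl _) (Iso.refl _) (by simp)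
        (by dsimp; simp [K.toCycles_i])) h1
  exact (exact_comp_mono_iff (K.iCycles n) (K.toCycles n (n+1)) (K.iCycles (n+1))
    (iCycles_comp_toCycles_zero K n)).1 h2

lemma exactAt_of_factorization (K : CochainComplex C ℤ)
    (G : ℤ → C) (m : ∀ n : ℤ, G n ⟶ K.X n) (e : ∀ n : ℤ, K.X n ⟶ G (n+1))
    (hm : ∀ n, Mono (m n)) (he : ∀ n, Epi (e n))
    (hw : ∀ n, m n ≫ e n = 0)
    (hexact : ∀ n, (ShortComplex.mk (m n) (e n) (hw n)).Exact)
    (hd : ∀ n, K.d n (n+1) = e n ≫ m (n+1)) :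
    ∀ n : ℤ, K.ExactAt n := by
  intro n
  obtain ⟨n', rfl⟩ : ∃ n', n = n' + 1 := ⟨n - 1, by omega⟩
  haveI := hm (n' + 1 + 1)
  haveI := he n'
  rw [K.exactAt_iff' n' (n'+1) (n'+1+1) (ComplexShape.prev_eq' _ (by simp))
    (ComplexShape.next_eq' _ (by simp))]
  have E1 : (ShortComplex.mk (m (n'+1)) (e (n'+1) ≫ m (n'+1+1))
      (by rw [← Category.assoc, hw, zero_comp])).Exact :=
    (exact_comp_mono_iff (m (n'+1)) (e (n'+1)) (m (n'+1+1)) (hw (n'+1))).2 (hexact (n'+1))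
  have E2 : (ShortComplex.mk (e n' ≫ m (n'+1)) (e (n'+1) ≫ m (n'+1+1))
      (by rw [Category.assoc, ← Category.assoc (m (n'+1)), hw, zero_comp, comp_zero])).Exact :=
    (exact_epi_comp_iff (e n') (m (n'+1)) (e (n'+1) ≫ m (n'+1+1)) _).2 E1
  have eiso : (ShortComplex.mk (e n' ≫ m (n'+1)) (e (n'+1) ≫ m (n'+1+1))
      (by rw [Category.assoc, ← Category.assoc (m (n'+1)), hw, zero_comp, comp_zero])) ≅
      K.sc' n' (n'+1) (n'+1+1) :=
    ShortComplex.isoMk (Iso.refl _) (Iso.refl _) (Iso.refl _)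
      (by exact (Category.id_comp _).trans ((hd n').trans (Category.comp_id _).symm))
      (by exact (Category.id_comp _).trans ((hd (n'+1)).trans (Category.comp_id _).symm))
  exact ShortComplex.exact_of_iso eiso E2

end Aux

/-- A complex with all terms in the torsion class `T` is exact in `A` if and only if it is
exact in the tilted heart `B`. -/
theorem exact_in_A_iff_exact_in_heart (tp : TorsionPair C) (K : CochainComplex C ℤ)
    (hK : ∀ n : ℤ, tp.torsion (K.X n)) :
    (∀ n : ℤ, K.ExactAt n) ↔ tp.ExactInHeart K := by
  constructor
  · intro hex
    have hse : ∀ n : ℤ, (ShortComplex.mk (K.iCycles n) (K.toCycles n (n+1))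
        (iCycles_comp_toCycles_zero K n)).ShortExact := fun n =>
      { exact := exact_iCycles_toCycles K n
        mono_f := inferInstance
        epi_g := epi_toCycles_of_exactAt K n (hex (n+1)) }
    refine ⟨fun n => (DerivedCategory.singleFunctor C 0).obj (K.cycles n), ?_,
      fun n => (DerivedCategory.singleFunctor C 0).map (K.iCycles n),
      fun n => (DerivedCategory.singleFunctor C 0).map (K.toCycles n (n+1)),
      fun n => (hse n).singleδ,
      fun n => (hse n).singleTriangle_distinguished,
      fun n => by rw [← Functor.map_comp, K.toCycles_i]⟩
    intro n
    refine ⟨?_, tp.torsionFree_of_isZero (isZero_homology_single C _ (-1) (by omega)),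
      fun i hi _ => isZero_homology_single C _ i hi⟩
    obtain ⟨n', rfl⟩ : ∃ n', n = n' + 1 := ⟨n - 1, by omega⟩
    haveI := epi_toCycles_of_exactAt K n' (hex (n'+1))
    have ht : tp.torsion (K.cycles (n'+1)) :=
      tp.torsion_of_epi (K.toCycles n' (n'+1)) (hK n')
    exact tp.torsion_of_iso ((gammaIso C).app (K.cycles (n'+1))).symm ht
  · rintro ⟨Z, hZ, i, p, h, hdist, hfac⟩
    have hZ1 : ∀ n : ℤ, IsZero ((DerivedCategory.homologyFunctor C (-1)).obj (Z n)) := by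
      intro n
      have e := DerivedCategory.HomologySequence.exact₁
        (Pretriangulated.Triangle.mk (i n) (p n) (h n)) (hdist n) (-2) (-1) (by omega)
      exact e.isZero_X₂ (((hZ (n+1)).2.2 (-2) (by omega) (by omega)).eq_of_src _ _)
        ((isZero_homology_single C (K.X n) (-1) (by omega)).eq_of_tgt _ _)
    have hmono : ∀ n : ℤ, Mono ((DerivedCategory.homologyFunctor C 0).map (i n)) := by
      intro n
      have e := DerivedCategory.HomologySequence.exact₁
        (Pretriangulated.Triangle.mk (i n) (p n) (h n)) (hdist n) (-1) 0 (by omega)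
      exact e.mono_g ((hZ1 (n+1)).eq_of_src _ _)
    have hepi : ∀ n : ℤ, Epi ((DerivedCategory.homologyFunctor C 0).map (p n)) := by
      intro n
      have e := DerivedCategory.HomologySequence.exact₃
        (Pretriangulated.Triangle.mk (i n) (p n) (h n)) (hdist n) 0 1 (by omega)
      exact e.epi_f (((hZ n).2.2 1 (by omega) (by omega)).eq_of_tgt _ _)
    have hip : ∀ n : ℤ, i n ≫ p n = 0 := fun n =>
      comp_distTriang_mor_zero₁₂ _ (hdist n)
    have hw : ∀ n : ℤ, ((DerivedCategory.homologyFunctor C 0).map (i n) ≫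
        (gammaIso C).hom.app (K.X n)) ≫ ((gammaIso C).inv.app (K.X n) ≫
        (DerivedCategory.homologyFunctor C 0).map (p n)) = 0 := fun n => by
      simp only [Category.assoc, Iso.hom_inv_id_app_assoc, ← Functor.map_comp, hip n,
        Functor.map_zero, comp_zero]
    have w₁ : ∀ n : ℤ, (DerivedCategory.homologyFunctor C 0).map (i n) ≫
        (DerivedCategory.homologyFunctor C 0).map (p n) = 0 := fun n => by
      rw [← Functor.map_comp, hip n, Functor.map_zero]
    have base : ∀ n : ℤ, (ShortComplex.mk _ _ (w₁ n)).Exact := fun n =>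
      DerivedCategory.HomologySequence.exact₂
        (Pretriangulated.Triangle.mk (i n) (p n) (h n)) (hdist n) 0
    have hexact : ∀ n : ℤ, (ShortComplex.mk _ _ (hw n)).Exact := fun n =>
      (ShortComplex.exact_iff_of_epi_of_isIso_of_mono
        (S₁ := ShortComplex.mk _ _ (w₁ n)) (S₂ := ShortComplex.mk _ _ (hw n))
        { τ₁ := 𝟙 _
          τ₂ := (gammaIso C).hom.app (K.X n)
          τ₃ := 𝟙 _
          comm₁₂ := by simp
          comm₂₃ := by simp }).1 (base n)
    refine exactAt_of_factorization K
      (fun n => (DerivedCategory.homologyFunctor C 0).obj (Z n))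
      (fun n => (DerivedCategory.homologyFunctor C 0).map (i n) ≫
        (gammaIso C).hom.app (K.X n))
      (fun n => (gammaIso C).inv.app (K.X n) ≫
        (DerivedCategory.homologyFunctor C 0).map (p n))
      (fun n => by haveI := hmono n; exact mono_comp _ _)
      (fun n => by haveI := hepi n; exact epi_comp _ _)
      hw hexact
      (fun n => by
        have hnat := (gammaIso C).hom.naturality (K.d n (n+1))
        dsimp at hnat
        rw [Category.assoc, ← Functor.map_comp_assoc, ← hfac n, hnat,
          Iso.inv_hom_id_app_assoc])
end

section
/- Let (T, F) be a tilting torsion pair on an abelian category A. Then the natural functor from the Verdier quotient K(T)/(K(T) ∩ K_ex(A)) to the derived category D(A), induced by the inclusion K(T) ↪ K(A), is an equivalence of triangulated categories. -/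
open CategoryTheory CategoryTheory.Limits CategoryTheory.Pretriangulated

universe w v u

section Auxiliary

open CategoryTheory.Localization

namespace VerdierAux

section GeneralLocalization

variable {C₁ C₂ D : Type*} [Category C₁] [Category C₂] [Category D]
  (Φ : C₁ ⥤ C₂) [Φ.Full] [Φ.Faithful]
  (W₂ : MorphismProperty C₂) [W₂.HasLeftCalculusOfFractions]

lemma hasLeftCalc (res : ∀ X₂ : C₂, ∃ (Y : C₁) (w : X₂ ⟶ Φ.obj Y), W₂ w) :
    (W₂.inverseImage Φ).HasLeftCalculusOfFractions := by
  have : (W₂.inverseImage Φ).IsMultiplicative :=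
    { id_mem := fun X => by
        change W₂ (Φ.map (𝟙 X))
        rw [Φ.map_id]
        exact W₂.id_mem _
      comp_mem := fun f g hf hg => by
        change W₂ (Φ.map (f ≫ g))
        rw [Φ.map_comp]
        exact W₂.comp_mem _ _ hf hg }
  refine ⟨fun X Y φ => ?_, fun X' X Y f₁ f₂ s hs fac => ?_⟩
  · obtain ⟨ψ, hψ⟩ := MorphismProperty.HasLeftCalculusOfFractions.exists_leftFraction
      (MorphismProperty.RightFraction.mk (Φ.map φ.s) φ.hs (Φ.map φ.f))
    obtain ⟨Z, r, hr⟩ := res ψ.Y'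
    refine ⟨MorphismProperty.LeftFraction.mk (Φ.preimage (ψ.f ≫ r))
      (Φ.preimage (ψ.s ≫ r)) ?_, Φ.map_injective ?_⟩
    · change W₂ (Φ.map _)
      rw [Φ.map_preimage]
      exact W₂.comp_mem _ _ ψ.hs hr
    · dsimp at hψ ⊢
      rw [Φ.map_comp, Φ.map_comp, Φ.map_preimage, Φ.map_preimage,
        ← Category.assoc, ← Category.assoc, hψ]
  · obtain ⟨Z', t, ht, fac'⟩ := MorphismProperty.HasLeftCalculusOfFractions.ext
      (Φ.map f₁) (Φ.map f₂) (Φ.map s) hs (by rw [← Φ.map_comp, ← Φ.map_comp, fac])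
    obtain ⟨Z, r, hr⟩ := res Z'
    refine ⟨Z, Φ.preimage (t ≫ r), ?_, Φ.map_injective ?_⟩
    · change W₂ (Φ.map _)
      rw [Φ.map_preimage]
      exact W₂.comp_mem _ _ ht hr
    · rw [Φ.map_comp, Φ.map_comp, Φ.map_preimage, ← Category.assoc, ← Category.assoc, fac']

theorem isLocalization_comp (L : C₂ ⥤ D) [L.IsLocalization W₂]
    (res : ∀ X₂ : C₂, ∃ (Y : C₁) (w : X₂ ⟶ Φ.obj Y), W₂ w) :
    (Φ ⋙ L).IsLocalization (W₂.inverseImage Φ) := by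
  have hcalc := hasLeftCalc Φ W₂ res
  set W₁ := W₂.inverseImage Φ with hW₁
  have hinv : W₁.IsInvertedBy (Φ ⋙ L) := fun X Y f hf => Localization.inverts L W₂ _ hf
  let G : W₁.Localization ⥤ D := Localization.lift (Φ ⋙ L) hinv W₁.Q
  let E : W₁.Q ⋙ G ≅ Φ ⋙ L := Localization.fac (Φ ⋙ L) hinv W₁.Q
  have hG : ∀ {A B : C₁} (h : A ⟶ B),
      G.map (W₁.Q.map h) = E.hom.app A ≫ L.map (Φ.map h) ≫ E.inv.app B := by
    intro A B h
    have := E.hom.naturality h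
    dsimp at this
    rw [← reassoc_of% this]
    simp
  -- essential surjectivity
  have hQes : (W₁.Q).EssSurj := Localization.essSurj W₁.Q W₁
  have hLes : L.EssSurj := Localization.essSurj L W₂
  have hGes : G.EssSurj := by
    constructor
    intro X
    obtain ⟨Y, w, hw⟩ := res (L.objPreimage X)
    exact ⟨W₁.Q.obj Y, ⟨E.app Y ≪≫ (Localization.isoOfHom L W₂ w hw).symm ≪≫
      L.objObjPreimageIso X⟩⟩
  -- bijectivity on homs between Q-objects
  have hsurj : ∀ (X Y : C₁) (g : G.obj (W₁.Q.obj X) ⟶ G.obj (W₁.Q.obj Y)),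
      ∃ a : W₁.Q.obj X ⟶ W₁.Q.obj Y, G.map a = g := by
    intro X Y g
    obtain ⟨φ, hφ⟩ := Localization.exists_leftFraction L W₂
      (E.inv.app X ≫ g ≫ E.hom.app Y)
    obtain ⟨Z, r, hr⟩ := res φ.Y'
    have hs' : W₁ (Φ.preimage (φ.s ≫ r)) := by
      change W₂ (Φ.map _)
      rw [Φ.map_preimage]
      exact W₂.comp_mem _ _ φ.hs hr
    refine ⟨W₁.Q.map (Φ.preimage (φ.f ≫ r)) ≫
      (Localization.isoOfHom W₁.Q W₁ _ hs').inv, ?_⟩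
    have : IsIso (G.map (W₁.Q.map (Φ.preimage (φ.s ≫ r)))) := by
      have : IsIso (W₁.Q.map (Φ.preimage (φ.s ≫ r))) :=
        Localization.inverts W₁.Q W₁ _ hs'
      infer_instance
    rw [← cancel_mono (G.map (W₁.Q.map (Φ.preimage (φ.s ≫ r)))), ← G.map_comp]
    have fac : (W₁.Q.map (Φ.preimage (φ.f ≫ r)) ≫
        (Localization.isoOfHom W₁.Q W₁ _ hs').inv) ≫ W₁.Q.map (Φ.preimage (φ.s ≫ r)) =
        W₁.Q.map (Φ.preimage (φ.f ≫ r)) := by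
      have : (Localization.isoOfHom W₁.Q W₁ _ hs').hom = W₁.Q.map (Φ.preimage (φ.s ≫ r)) := rfl
      rw [Category.assoc, ← this, Iso.inv_hom_id, Category.comp_id]
    rw [fac, hG, hG]
    rw [Φ.map_preimage, Φ.map_preimage]
    have hg : g = E.hom.app X ≫ (E.inv.app X ≫ g ≫ E.hom.app Y) ≫ E.inv.app Y := by simp
    rw [hg, hφ, L.map_comp]
    simp only [Category.assoc, Iso.inv_hom_id_app_assoc,
      MorphismProperty.LeftFraction.map_comp_map_s_assoc, L.map_comp]
  have hinj : ∀ (X Y : C₁) (a b : W₁.Q.obj X ⟶ W₁.Q.obj Y), G.map a = G.map b → a = b := by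
    intro X Y a b hab
    obtain ⟨φ, rfl⟩ := Localization.exists_leftFraction W₁.Q W₁ a
    obtain ⟨ψ, rfl⟩ := Localization.exists_leftFraction W₁.Q W₁ b
    have key : ∀ (χ : W₁.LeftFraction X Y),
        G.map (χ.map W₁.Q (Localization.inverts W₁.Q W₁)) =
          E.hom.app X ≫ (MorphismProperty.LeftFraction.mk (Φ.map χ.f) (Φ.map χ.s) χ.hs).map L
            (Localization.inverts L W₂) ≫ E.inv.app Y := by
      intro χ
      have : IsIso (G.map (W₁.Q.map χ.s)) := by
        have : IsIso (W₁.Q.map χ.s) := Localization.inverts W₁.Q W₁ _ χ.hs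
        infer_instance
      rw [← cancel_mono (G.map (W₁.Q.map χ.s)), ← G.map_comp,
        MorphismProperty.LeftFraction.map_comp_map_s, hG, hG]
      simp only [Category.assoc, Iso.inv_hom_id_app_assoc]
      rw [MorphismProperty.LeftFraction.map_comp_map_s_assoc
        (MorphismProperty.LeftFraction.mk (Φ.map χ.f) (Φ.map χ.s) χ.hs) L
        (Localization.inverts L W₂)]
    rw [key, key] at hab
    have hab' : (MorphismProperty.LeftFraction.mk (Φ.map φ.f) (Φ.map φ.s) φ.hs).map L
        (Localization.inverts L W₂) =
        (MorphismProperty.LeftFraction.mk (Φ.map ψ.f) (Φ.map ψ.s) ψ.hs).map L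
          (Localization.inverts L W₂) := by
      rw [← cancel_epi (E.hom.app X), ← cancel_mono (E.inv.app Y)]
      simpa [Category.assoc] using hab
    rw [MorphismProperty.LeftFraction.map_eq_iff] at hab'
    obtain ⟨Z₃, t₁, t₂, hst, hft, ht⟩ := hab'
    obtain ⟨Z₄, r, hr⟩ := res Z₃
    rw [MorphismProperty.LeftFraction.map_eq_iff]
    refine ⟨Z₄, Φ.preimage (t₁ ≫ r), Φ.preimage (t₂ ≫ r), Φ.map_injective ?_, Φ.map_injective ?_, ?_⟩
    · rw [Φ.map_comp, Φ.map_comp, Φ.map_preimage, Φ.map_preimage, ← Category.assoc,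
        ← Category.assoc]
      dsimp at hst
      rw [hst]
    · rw [Φ.map_comp, Φ.map_comp, Φ.map_preimage, Φ.map_preimage, ← Category.assoc,
        ← Category.assoc]
      dsimp at hft
      rw [hft]
    · change W₂ (Φ.map _)
      rw [Φ.map_comp, Φ.map_preimage, ← Category.assoc]
      exact W₂.comp_mem _ _ ht hr
  haveI hGfull : G.Full := by
    constructor
    intro P P' g
    let eX := W₁.Q.objObjPreimageIso P
    let eY := W₁.Q.objObjPreimageIso P'
    obtain ⟨a, ha⟩ := hsurj _ _ (G.map eX.hom ≫ g ≫ G.map eY.inv)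
    refine ⟨eX.inv ≫ a ≫ eY.hom, ?_⟩
    rw [G.map_comp, G.map_comp, ha]
    simp only [← Category.assoc]
    rw [← G.map_comp, eX.inv_hom_id, G.map_id, Category.id_comp]
    simp only [Category.assoc]
    rw [← G.map_comp, eY.inv_hom_id, G.map_id, Category.comp_id]
  haveI hGfaithful : G.Faithful := by
    constructor
    intro P P' u v huv
    let eX := W₁.Q.objObjPreimageIso P
    let eY := W₁.Q.objObjPreimageIso P'
    have := hinj _ _ (eX.hom ≫ u ≫ eY.inv) (eX.hom ≫ v ≫ eY.inv)
      (by rw [G.map_comp, G.map_comp, G.map_comp, G.map_comp, huv])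
    rw [← cancel_epi eX.hom, ← cancel_mono eY.inv]
    simpa using this
  haveI : G.EssSurj := hGes
  haveI : G.IsEquivalence := { }
  exact Functor.IsLocalization.of_equivalence_target W₁.Q W₁ (Φ ⋙ L) G.asEquivalence E

end GeneralLocalization

section MapHomotopyCategoryFF

variable {ι : Type*} {V W' : Type*} [Category V] [Category W'] [Preadditive V] [Preadditive W']
  (F : V ⥤ W') [F.Additive] (c : ComplexShape ι)

lemma mapHomotopyCategory_full [F.Full] [F.Faithful] : (F.mapHomotopyCategory c).Full := by
  constructor
  rintro ⟨A⟩ ⟨B⟩ u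
  obtain ⟨v, hv⟩ := (HomotopyCategory.quotient W' c).map_surjective u
  refine ⟨(HomotopyCategory.quotient V c).map
    { f := fun n => F.preimage (v.f n)
      comm' := fun i j _ => F.map_injective (by
        rw [F.map_comp, F.map_comp]
        erw [F.map_preimage, F.map_preimage]
        exact v.comm i j) }, ?_⟩
  erw [Functor.mapHomotopyCategory_map, ← hv]
  congr 1
  ext n
  exact F.map_preimage _

lemma mapHomotopyCategory_faithful [F.Full] [F.Faithful] :
    (F.mapHomotopyCategory c).Faithful := by
  constructor
  rintro ⟨A⟩ ⟨B⟩ f g hfg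
  obtain ⟨f', rfl⟩ := (HomotopyCategory.quotient V c).map_surjective f
  obtain ⟨g', rfl⟩ := (HomotopyCategory.quotient V c).map_surjective g
  erw [Functor.mapHomotopyCategory_map, Functor.mapHomotopyCategory_map] at hfg
  have h := HomotopyCategory.homotopyOfEq _ _ hfg
  apply HomotopyCategory.eq_of_homotopy
  exact
    { hom := fun i j => F.preimage (h.hom i j)
      zero := fun i j hij => F.map_injective (by
        erw [F.map_preimage, h.zero i j hij, F.map_zero]
        rfl)
      comm := fun i => F.map_injective (by
        have hc := h.comm i
        dsimp [dNext, prevD] at hc ⊢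
        simp only [AddMonoidHom.mk'_apply] at hc ⊢
        erw [F.map_add, F.map_add, F.map_comp, F.map_comp, F.map_preimage, F.map_preimage]
        exact hc) }

end MapHomotopyCategoryFF

end VerdierAux

namespace TorsionPair

variable {C : Type u} [Category.{v} C] [Abelian C] (tp : TorsionPair C)

lemma torsion_of_orth {X : C} (h : ∀ (F : C) (f : X ⟶ F), tp.torsionFree F → f = 0) :
    tp.torsion X := by
  obtain ⟨T₀, F₀, f, g, w, hT, hF, hse⟩ := tp.exists_ses X
  have hg : g = 0 := h _ _ hF
  have hepi : Epi g := hse.epi_g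
  have : Epi f := hse.exact.epi_f hg
  have : Mono f := hse.mono_f
  have : IsIso f := isIso_of_mono_of_epi f
  exact tp.torsion_summand T₀ X (inv f) f hT (by simp)

lemma torsion_of_epi_s11 {T X : C} (π : T ⟶ X) [Epi π] (hT : tp.torsion T) : tp.torsion X :=
  tp.torsion_of_orth (fun F f hF => by
    rw [← cancel_epi π, comp_zero]
    exact tp.hom_orth T F hT hF (π ≫ f))

lemma torsion_biprod {T₁ T₂ : C} (h₁ : tp.torsion T₁) (h₂ : tp.torsion T₂) :
    tp.torsion (T₁ ⊞ T₂) :=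
  tp.torsion_of_orth (fun F f hF => by
    ext
    · rw [tp.hom_orth T₁ F h₁ hF (biprod.inl ≫ f), comp_zero]
    · rw [tp.hom_orth T₂ F h₂ hF (biprod.inr ≫ f), comp_zero])

open CochainComplex HomologicalComplex CochainComplex.HomComplex

lemma exists_coresolution
    (tilting : ∀ X : C, ∃ (T₀ : C) (i : X ⟶ T₀), tp.torsion T₀ ∧ Mono i)
    (X : CochainComplex C ℤ) :
    ∃ (Z : CochainComplex C ℤ) (_ : ∀ n, tp.torsion (Z.X n))
      (w : ((HomotopyCategory.quotient C (ComplexShape.up ℤ)).obj X)⟦(1:ℤ)⟧ ⟶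
        (HomotopyCategory.quotient C (ComplexShape.up ℤ)).obj Z),
      HomotopyCategory.quasiIso C (ComplexShape.up ℤ) w := by
  choose T u hT hu using fun n => tilting (X.X n)
  let K : CochainComplex C ℤ :=
    { X := T
      d := fun _ _ => 0
      shape := fun _ _ _ => rfl
      d_comp_d' := fun _ _ _ _ _ => by simp }
  have hKd : ∀ i j, K.d i j = 0 := fun _ _ => rfl
  let α : Cocycle X K 1 := Cocycle.mk (Cochain.mk (fun p q _ => X.d p q ≫ u q)) 2 rfl (by
    ext p q hpq
    rw [δ_v 1 2 rfl _ p q hpq (q - 1) (p + 1) rfl rfl]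
    simp [hKd])
  have eq : δ 0 1 (Cochain.ofHoms u) +
      α.1.comp (Cochain.ofHom (𝟙 K)) (add_zero 1) = 0 := by
    ext p q hpq
    rw [Cochain.add_v, δ_v 0 1 rfl _ p q hpq (q - 1) (p + 1) rfl rfl]
    obtain rfl : q = p + 1 := by omega
    simp [hKd, α]
  let f : X ⟶ mappingCone (𝟙 K) := mappingCone.lift (𝟙 K) α (Cochain.ofHoms u) eq
  have hmono : ∀ n, Mono (f.f n) := by
    intro n
    have hc : f.f n ≫ (mappingCone.snd (𝟙 K)).v n n (add_zero n) = u n := by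
      simp [f]
    have : Mono (f.f n ≫ (mappingCone.snd (𝟙 K)).v n n (add_zero n)) := by
      rw [hc]; exact hu n
    exact mono_of_mono _ ((mappingCone.snd (𝟙 K)).v n n (add_zero n))
  let amb := mappingCone (𝟙 K)
  have hfd : ∀ (i j : ℤ), f.f i ≫ amb.d i j ≫ cokernel.π (f.f j) = 0 := by
    intro i j
    rw [← Category.assoc, f.comm i j, Category.assoc, cokernel.condition, comp_zero]
  let Z : CochainComplex C ℤ :=
    { X := fun n => cokernel (f.f n)
      d := fun i j => cokernel.desc _ (amb.d i j ≫ cokernel.π _) (hfd i j)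
      shape := fun i j hij => by
        rw [← cancel_epi (cokernel.π (f.f i)), cokernel.π_desc, amb.shape i j hij,
          zero_comp, comp_zero]
      d_comp_d' := fun i j k _ _ => by
        rw [← cancel_epi (cokernel.π (f.f i))]
        simp }
  let g : amb ⟶ Z :=
    { f := fun n => cokernel.π _
      comm' := fun i j _ => by simp [Z] }
  let S : ShortComplex (CochainComplex C ℤ) := ShortComplex.mk f g (by
    ext n
    exact cokernel.condition (f.f n))
  have hS : S.ShortExact := by
    apply HomologicalComplex.shortExact_of_degreewise_shortExact
    intro i
    have : Mono (f.f i) := hmono i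
    refine { exact := ?_, mono_f := ?_, epi_g := ?_ }
    · exact ShortComplex.exact_of_g_is_cokernel _ (cokernelIsCokernel (f.f i))
    · exact this
    · change Epi (cokernel.π (f.f i)); infer_instance
  have hZt : ∀ n, tp.torsion (Z.X n) := by
    intro n
    have hbi : tp.torsion (K.X (n + 1) ⊞ K.X n) := tp.torsion_biprod (hT _) (hT _)
    let e := homotopyCofiber.XIsoBiprod (𝟙 K) n (n + 1)
      (show (ComplexShape.up ℤ).Rel n (n + 1) from rfl)
    have h1 : Epi (cokernel.π (f.f n)) := inferInstance
    have : Epi (e.inv ≫ cokernel.π (f.f n)) := @epi_comp _ _ _ _ _ e.inv _ _ h1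
    exact tp.torsion_of_epi_s11 (e.inv ≫ cokernel.π (f.f n)) hbi
  -- the quasi-isomorphism from the mapping cone of `f`
  let q : mappingCone f ⟶ Z := mappingCone.descShortComplex S
  have hq : QuasiIso q := mappingCone.quasiIso_descShortComplex hS
  -- the triangle in the homotopy category
  have hTh := HomotopyCategory.mappingCone_triangleh_distinguished f
  have hzero : IsZero ((HomotopyCategory.quotient C (ComplexShape.up ℤ)).obj amb) := by
    rw [IsZero.iff_id_eq_zero, ← (HomotopyCategory.quotient C (ComplexShape.up ℤ)).map_id,
      HomotopyCategory.eq_of_homotopy _ _ (mappingCone.homotopyToZeroOfId K),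
      Functor.map_zero]
  have hmor₃ : IsIso ((mappingCone.triangleh f).mor₃) :=
    (Triangle.isZero₂_iff_isIso₃ _ hTh).1 hzero
  refine ⟨Z, hZt, @inv _ _ _ _ _ hmor₃ ≫
    (HomotopyCategory.quotient C (ComplexShape.up ℤ)).map q, ?_⟩
  rw [HomotopyCategory.mem_quasiIso_iff]
  intro n
  erw [Functor.map_comp]
  have h3 : HomotopyCategory.quasiIso C (ComplexShape.up ℤ)
      ((HomotopyCategory.quotient C (ComplexShape.up ℤ)).map q) :=
    (HomotopyCategory.quotient_map_mem_quasiIso_iff q).2 hq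
  have := h3 n
  exact @IsIso.comp_isIso _ _ _ _ _ _ _ (@Functor.map_isIso _ _ _ _ _ _ _ _ (@IsIso.inv_isIso _ _ _ _ _ hmor₃)) this


lemma hasResolutions {C : Type u} [Category.{v} C] [Abelian C] (tp : TorsionPair C)
    (tilting : ∀ X : C, ∃ (T₀ : C) (i : X ⟶ T₀), tp.torsion T₀ ∧ Mono i)
    (P : HomotopyCategory C (ComplexShape.up ℤ)) :
    ∃ (Y : HomotopyCategory (ObjectProperty.FullSubcategory tp.torsion) (ComplexShape.up ℤ))
      (w : P ⟶ ((ObjectProperty.ι tp.torsion).mapHomotopyCategory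
        (ComplexShape.up ℤ)).obj Y),
      HomotopyCategory.quasiIso C (ComplexShape.up ℤ) w := by
  obtain ⟨A⟩ := P
  obtain ⟨Z, hZ, w₁, hw₁⟩ := tp.exists_coresolution tilting (A⟦(-1:ℤ)⟧)
  let Z' : CochainComplex (ObjectProperty.FullSubcategory tp.torsion) ℤ :=
    { X := fun n => ⟨Z.X n, hZ n⟩
      d := fun i j => ObjectProperty.homMk (Z.d i j)
      shape := fun i j h => by ext; exact Z.shape i j h
      d_comp_d' := fun i j k hij hjk => by ext; exact Z.d_comp_d' i j k hij hjk }
  let e : ((ObjectProperty.ι tp.torsion).mapHomologicalComplex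
      (ComplexShape.up ℤ)).obj Z' ≅ Z :=
    HomologicalComplex.Hom.isoOfComponents (fun n => Iso.refl _) (by simp [Z']; exact fun i => (Category.id_comp _).trans (Category.comp_id _).symm)
  let i₁ : A ≅ (A⟦(-1:ℤ)⟧)⟦(1:ℤ)⟧ :=
    ((shiftFunctorCompIsoId (CochainComplex C ℤ) (-1 : ℤ) (1 : ℤ) (by omega)).app A).symm
  let i₂ : (HomotopyCategory.quotient C (ComplexShape.up ℤ)).obj ((A⟦(-1:ℤ)⟧)⟦(1:ℤ)⟧) ≅
      ((HomotopyCategory.quotient C (ComplexShape.up ℤ)).obj (A⟦(-1:ℤ)⟧))⟦(1:ℤ)⟧ :=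
    ((HomotopyCategory.quotient C (ComplexShape.up ℤ)).commShiftIso (1 : ℤ)).app (A⟦(-1:ℤ)⟧)
  let i₃ := ((ObjectProperty.ι tp.torsion).mapHomotopyCategoryFactors
    (ComplexShape.up ℤ)).app Z'
  refine ⟨(HomotopyCategory.quotient _ _).obj Z',
    ((HomotopyCategory.quotient C (ComplexShape.up ℤ)).mapIso i₁).hom ≫ i₂.hom ≫ w₁ ≫
      ((HomotopyCategory.quotient C (ComplexShape.up ℤ)).mapIso e).inv ≫ i₃.inv, ?_⟩
  erw [HomotopyCategory.mem_quasiIso_iff]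
  intro n
  have h1 := hw₁ n
  erw [Functor.map_comp, Functor.map_comp, Functor.map_comp, Functor.map_comp]
  have t1 : IsIso ((HomotopyCategory.homologyFunctor C (ComplexShape.up ℤ) n).map
        ((HomotopyCategory.quotient C (ComplexShape.up ℤ)).mapIso i₁).hom) := inferInstance
  have t2 : IsIso ((HomotopyCategory.homologyFunctor C (ComplexShape.up ℤ) n).map i₂.hom) := inferInstance
  have t3 : IsIso ((HomotopyCategory.homologyFunctor C (ComplexShape.up ℤ) n).map
              ((HomotopyCategory.quotient C (ComplexShape.up ℤ)).mapIso e).inv) := inferInstance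
  have t4 : IsIso ((HomotopyCategory.homologyFunctor C (ComplexShape.up ℤ) n).map i₃.inv) := inferInstance
  exact @IsIso.comp_isIso _ _ _ _ _ _ _ t1 (@IsIso.comp_isIso _ _ _ _ _ _ _ t2
    (@IsIso.comp_isIso _ _ _ _ _ _ _ h1 (@IsIso.comp_isIso _ _ _ _ _ _ _ t3 t4)))

end TorsionPair

end Auxiliary

/-- For a tilting torsion pair `(T, F)` on `A`, the functor `K(T) → D(A)` induced by the
inclusion `K(T) ↪ K(A)` exhibits `D(A)` as the Verdier quotient (localization) of `K(T)`
by the maps with acyclic cone, i.e. the induced functor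
`K(T)/(K(T) ∩ K_ex(A)) → D(A)` is an equivalence of triangulated categories. -/
theorem verdier_quotient_equiv_derivedCategory {C : Type u} [Category.{v} C] [Abelian C]
    [HasDerivedCategory.{w} C] (tp : TorsionPair C)
    (tilting : ∀ X : C, ∃ (T₀ : C) (i : X ⟶ T₀), tp.torsion T₀ ∧ Mono i) :
    ((ObjectProperty.ι tp.torsion).mapHomotopyCategory (ComplexShape.up ℤ) ⋙
        DerivedCategory.Qh).IsLocalization
      ((HomotopyCategory.quasiIso C (ComplexShape.up ℤ)).inverseImage
        ((ObjectProperty.ι tp.torsion).mapHomotopyCategory (ComplexShape.up ℤ))) := by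
  haveI : (HomotopyCategory.quasiIso C (ComplexShape.up ℤ)).HasLeftCalculusOfFractions := by
    rw [HomotopyCategory.quasiIso_eq_subcategoryAcyclic_W]
    infer_instance
  haveI : ((ObjectProperty.ι tp.torsion).mapHomotopyCategory
      (ComplexShape.up ℤ)).Full := VerdierAux.mapHomotopyCategory_full _ _
  haveI : ((ObjectProperty.ι tp.torsion).mapHomotopyCategory
      (ComplexShape.up ℤ)).Faithful := VerdierAux.mapHomotopyCategory_faithful _ _
  exact VerdierAux.isLocalization_comp _ _ DerivedCategory.Qh (tp.hasResolutions tilting)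
end
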